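/- Let M = (E, 𝓘) be a matroid and let I_1, …, I_τ be a nested system of spanning sets (NSS) of M. For an arbitrary independent set S of M, define I_j' = I_j \ S for all j ∈ {1,…,τ}. Then the sequence I_1', …, I_τ' is an NSS of the contraction minor M/S. -/
import Mathlib


open Finset

noncomputable section

variable {E : Type*} [Fintype E] [DecidableEq E]

/-- Probability that an independent-inclusion random subset of `E`, in which each element `e`
is included independently with probability `π e`, is exactly the set `A`. -/
def prodWeight (π : E → ℝ) (A : Finset E) : ℝ :=
  (∏ e ∈ A, π e) * ∏ e ∈ Aᶜ, (1 - π e)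

/-- Expectation of `g` under the independent-inclusion random subset with marginals `π`. -/
def expec (π : E → ℝ) (g : Finset E → ℝ) : ℝ :=
  ∑ A : Finset E, prodWeight π A * g A

/-- Total (additive) weight of a finite set. -/
def setWeight (w : E → ℝ) (T : Finset E) : ℝ := ∑ e ∈ T, w e

/-- Value of a best feasible (w.r.t. `𝓘`) subset of `S`, for the objective `f`. -/
def bestVal (𝓘 : Set (Finset E)) (f : Finset E → ℝ) (S : Finset E) : ℝ :=
  sSup (f '' {T | T ⊆ S ∧ T ∈ 𝓘})

/-- A (finite) matroid on the ground set `E`, given by its independent sets. -/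
structure FinMatroid (E : Type*) [Fintype E] [DecidableEq E] where
  Indep : Finset E → Prop
  empty_indep : Indep ∅
  indep_subset : ∀ ⦃S T : Finset E⦄, Indep T → S ⊆ T → Indep S
  indep_exchange : ∀ ⦃S T : Finset E⦄, Indep S → Indep T → S.card < T.card →
    ∃ e ∈ T, e ∉ S ∧ Indep (insert e S)

/-- The rank function of a matroid: the maximum cardinality of an independent subset of `S`. -/
def FinMatroid.rank (M : FinMatroid E) (S : Finset E) : ℕ :=
  sSup {n | ∃ T ⊆ S, M.Indep T ∧ T.card = n}

/-- `I_1 ∪ ⋯ ∪ I_j` (sets are indexed starting from `1`). -/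
def prefixUnion (I : ℕ → Finset E) (j : ℕ) : Finset E :=
  (Finset.Icc 1 j).biUnion I

/-- A nested system of spanning sets for the set system on ground set `G` with rank
function `rk`: each `I_j` lies outside `I_{1:j-1}` and is spanning (full rank) in the
deletion minor obtained by removing `I_{1:j-1}` from `G`. -/
def IsNSS (rk : Finset E → ℕ) (G : Finset E) (τ : ℕ) (I : ℕ → Finset E) : Prop :=
  ∀ j ∈ Finset.Icc 1 τ,
    I j ⊆ G \ prefixUnion I (j - 1) ∧ rk (I j) = rk (G \ prefixUnion I (j - 1))

/-- `I` is a maximum-`w`-weight independent set of the restriction of `M` to `G`. -/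
def IsMaxWeightIndep (M : FinMatroid E) (w : E → ℝ) (G : Finset E) (I : Finset E) : Prop :=
  I ⊆ G ∧ M.Indep I ∧ ∀ J ⊆ G, M.Indep J → setWeight w J ≤ setWeight w I

/-- `I` is a maximum-`w`-weight base of the restriction (deletion minor) of `M` to `G`. -/
def IsMaxWeightBase (M : FinMatroid E) (w : E → ℝ) (G : Finset E) (I : Finset E) : Prop :=
  I ⊆ G ∧ M.Indep I ∧ M.rank I = M.rank G ∧
    ∀ J ⊆ G, M.Indep J → M.rank J = M.rank G → setWeight w J ≤ setWeight w I

namespace FinMatroid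

variable {E : Type*} [Fintype E] [DecidableEq E] (M : FinMatroid E)

lemma le_rank {X T : Finset E} (hTX : T ⊆ X) (hT : M.Indep T) : T.card ≤ M.rank X :=
  le_csSup ⟨X.card, fun n ⟨T', hT', _, hc⟩ => hc ▸ Finset.card_le_card hT'⟩ ⟨T, hTX, hT, rfl⟩

lemma rank_achieved (X : Finset E) : ∃ T ⊆ X, M.Indep T ∧ T.card = M.rank X := by
  have hne : {n | ∃ T ⊆ X, M.Indep T ∧ T.card = n}.Nonempty :=
    ⟨0, ∅, Finset.empty_subset X, M.empty_indep, Finset.card_empty⟩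
  have hbdd : BddAbove {n | ∃ T ⊆ X, M.Indep T ∧ T.card = n} :=
    ⟨X.card, fun n ⟨T', hT', _, hc⟩ => hc ▸ Finset.card_le_card hT'⟩
  have h : M.rank X ∈ {n | ∃ T ⊆ X, M.Indep T ∧ T.card = n} := Nat.sSup_mem hne hbdd
  obtain ⟨T, h1, h2, h3⟩ := h
  exact ⟨T, h1, h2, h3⟩

lemma rank_mono {X Y : Finset E} (h : X ⊆ Y) : M.rank X ≤ M.rank Y := by
  obtain ⟨T, hT1, hT2, hT3⟩ := M.rank_achieved X
  exact hT3 ▸ M.le_rank (hT1.trans h) hT2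

lemma exists_extend {X T : Finset E} (hTX : T ⊆ X) (hT : M.Indep T) :
    ∃ T', T ⊆ T' ∧ T' ⊆ X ∧ M.Indep T' ∧ T'.card = M.rank X := by
  by_cases h : M.rank X ≤ T.card
  · exact ⟨T, subset_rfl, hTX, hT, le_antisymm (M.le_rank hTX hT) h⟩
  · push_neg at h
    obtain ⟨W, hW1, hW2, hW3⟩ := M.rank_achieved X
    obtain ⟨e, heW, heT, hins⟩ := M.indep_exchange hT hW2 (hW3 ▸ h)
    have hsub : insert e T ⊆ X := Finset.insert_subset (hW1 heW) hTX
    obtain ⟨T', h1, h2, h3, h4⟩ := exists_extend hsub hins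
    exact ⟨T', (Finset.subset_insert e T).trans h1, h2, h3, h4⟩
termination_by M.rank X - T.card
decreasing_by
  have : T.card < (insert e T).card := by rw [Finset.card_insert_of_notMem heT]; omega
  omega

lemma rank_union_congr {A B : Finset E} (hAB : A ⊆ B) (h : M.rank A = M.rank B)
    (C : Finset E) : M.rank (A ∪ C) = M.rank (B ∪ C) := by
  refine le_antisymm (M.rank_mono (Finset.union_subset_union_left hAB)) ?_
  obtain ⟨T0, hT01, hT02, hT03⟩ := M.rank_achieved A
  obtain ⟨T, hTT0, hTX, hTind, hTcard⟩ :=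
    M.exists_extend (hT01.trans Finset.subset_union_left) hT02
  -- T is maximal independent in B ∪ C
  have hmax : ∀ e ∈ B ∪ C, e ∉ T → ¬ M.Indep (insert e T) := by
    intro e he heT hins
    rcases Finset.mem_union.mp he with heB | heC
    · have hins0 : M.Indep (insert e T0) :=
        M.indep_subset hins (Finset.insert_subset_insert e hTT0)
      have heT0 : e ∉ T0 := fun h' => heT (hTT0 h')
      have : (insert e T0).card ≤ M.rank B :=
        M.le_rank (Finset.insert_subset heB (hT01.trans hAB)) hins0
      rw [Finset.card_insert_of_notMem heT0, hT03, h] at this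
      omega
    · have : (insert e T).card ≤ M.rank (A ∪ C) :=
        M.le_rank (Finset.insert_subset (Finset.mem_union_right A heC) hTX) hins
      rw [Finset.card_insert_of_notMem heT, hTcard] at this
      omega
  by_contra hlt
  push_neg at hlt
  obtain ⟨W, hW1, hW2, hW3⟩ := M.rank_achieved (B ∪ C)
  have hcard : T.card < W.card := by omega
  obtain ⟨e, heW, heT, hins⟩ := M.indep_exchange hTind hW2 hcard
  exact hmax e (hW1 heW) heT hins

end FinMatroid

/-- (see above) -/
theorem stmt_5 (M : FinMatroid E) (τ : ℕ) (I : ℕ → Finset E)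
    (hNSS : IsNSS M.rank Finset.univ τ I)
    (S : Finset E) (hS : M.Indep S) :
    IsNSS (fun T => M.rank (T ∪ S) - S.card) (Finset.univ \ S) τ (fun j => I j \ S) := by
  intro j hj
  obtain ⟨hsub, hrk⟩ := hNSS j hj
  have hpre : prefixUnion (fun k => I k \ S) (j - 1) = prefixUnion I (j - 1) \ S := by
    ext x; simp [prefixUnion, Finset.mem_biUnion]; tauto
  set P := prefixUnion I (j - 1) with hP
  constructor
  · intro x hx
    have hxI : x ∈ I j := (Finset.mem_sdiff.mp hx).1
    have hxS : x ∉ S := (Finset.mem_sdiff.mp hx).2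
    have hxP : x ∉ P := (Finset.mem_sdiff.mp (hsub hxI)).2
    rw [hpre]
    simp only [Finset.mem_sdiff]
    exact ⟨⟨Finset.mem_univ x, hxS⟩, fun h => hxP h.1⟩
  · have e1 : (I j \ S) ∪ S = I j ∪ S := by
      ext x; simp
    have e2 : ((Finset.univ \ S) \ prefixUnion (fun k => I k \ S) (j - 1)) ∪ S
        = (Finset.univ \ P) ∪ S := by
      rw [hpre]; ext x; simp; tauto
    simp only
    rw [e1, e2, M.rank_union_congr hsub hrk S]
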